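/- There exists a unique twice continuously differentiable function Y : [-1,1] → ℝ satisfying L[Y](x) = 3|x| for all x ∈ [-1,1]. Moreover, this Y is even, i.e. Y(-x) = Y(x), and strictly positive: Y(x) > 0 for every x ∈ [-1,1]. (Y is the first-order profile Y₁ of the generalized apparent horizon Ŝ_ε in the perturbed Kruskal slices Σ_ε; in the paper it is given by the Fourier–Legendre series Y₁ = 3/2 + Σ_{l≥1} a_{2l} P_{2l}, and its positivity follows from the maximum principle applied to L[Y₁] = 3|x|.) -/

import Mathlib

open Set

/-- The linearized generalized-apparent-horizon operator
`L[z](x) = -(1 - x²) z''(x) + 2x z'(x) + z(x)`, written in terms of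
given derivative functions `z'`, `z''`. -/
noncomputable def Lop (z z' z'' : ℝ → ℝ) (x : ℝ) : ℝ :=
  -(1 - x ^ 2) * z'' x + 2 * x * z' x + z x

/-- `z` is twice continuously differentiable on `[-1,1]`, with first derivative `z'`
and second derivative `z''`. -/
def IsC2On (z z' z'' : ℝ → ℝ) : Prop :=
  (∀ x ∈ Icc (-1 : ℝ) 1, HasDerivWithinAt z (z' x) (Icc (-1 : ℝ) 1) x) ∧
  (∀ x ∈ Icc (-1 : ℝ) 1, HasDerivWithinAt z' (z'' x) (Icc (-1 : ℝ) 1) x) ∧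
  ContinuousOn z'' (Icc (-1 : ℝ) 1)



namespace Y1aux

/-- Coefficients of the homogeneous power series. -/
noncomputable def d : ℕ → ℝ
  | 0 => 1
  | (k+1) => (((k : ℝ)^2 + k + 1) / ((k : ℝ) + 1)^2) * d k

lemma d_zero : d 0 = 1 := rfl

lemma d_pos : ∀ k, 0 < d k := by
  intro k
  induction k with
  | zero => norm_num [d]
  | succ k ih =>
    have h1 : (0:ℝ) < (k : ℝ)^2 + k + 1 := by positivity
    have h2 : (0:ℝ) < ((k : ℝ) + 1)^2 := by positivity
    rw [d]
    positivity

lemma d_le_one : ∀ k, d k ≤ 1 := by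
  intro k
  induction k with
  | zero => norm_num [d]
  | succ k ih =>
    rw [d]
    have h2 : (0:ℝ) < ((k : ℝ) + 1)^2 := by positivity
    have hr : (((k : ℝ)^2 + k + 1) / ((k : ℝ) + 1)^2) ≤ 1 := by
      rw [div_le_one h2]; nlinarith [sq_nonneg ((k:ℝ))]
    have h1 : (0:ℝ) ≤ (((k : ℝ)^2 + k + 1) / ((k : ℝ) + 1)^2) := by positivity
    calc (((k : ℝ)^2 + k + 1) / ((k : ℝ) + 1)^2) * d k ≤ 1 * 1 := by
          apply mul_le_mul hr ih (d_pos k).le (by norm_num)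
      _ = 1 := by norm_num

lemma d_rec (k : ℕ) : ((k : ℝ) + 1)^2 * d (k+1) = ((k : ℝ)^2 + k + 1) * d k := by
  rw [d]
  have h2 : ((k : ℝ) + 1)^2 ≠ 0 := by positivity
  field_simp

/-- Summability of polynomially weighted geometric series. -/
lemma summable_cube_geo {r : ℝ} (hr0 : 0 ≤ r) (hr : r < 1) :
    Summable (fun k : ℕ => ((k : ℝ) + 1)^3 * r ^ k) := by
  have hr' : ‖r‖ < 1 := by rwa [Real.norm_eq_abs, abs_of_nonneg hr0]
  have h0 := summable_pow_mul_geometric_of_norm_lt_one (R := ℝ) 0 hr'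
  have h1 := summable_pow_mul_geometric_of_norm_lt_one (R := ℝ) 1 hr'
  have h2 := summable_pow_mul_geometric_of_norm_lt_one (R := ℝ) 2 hr'
  have h3 := summable_pow_mul_geometric_of_norm_lt_one (R := ℝ) 3 hr'
  have := (h3.add ((h2.mul_left 3).add ((h1.mul_left 3).add h0)))
  apply this.congr
  intro k; ring

lemma C_nonneg (a : ℕ → ℝ) (C : ℝ) (hC : ∀ k, |a k| ≤ C * ((k : ℝ)+1)^2) : 0 ≤ C := by
  have h0 := hC 0
  norm_num at h0
  exact le_trans (abs_nonneg _) h0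

lemma summable_powSeries (a : ℕ → ℝ) (C : ℝ) (hC : ∀ k, |a k| ≤ C * ((k : ℝ)+1)^2)
    {t : ℝ} (ht : |t| < 1) : Summable fun k => a k * t ^ k := by
  have hC0 : 0 ≤ C := C_nonneg a C hC
  refine Summable.of_norm_bounded
    ((summable_cube_geo (abs_nonneg t) ht).mul_left C) ?_
  intro k
  have h1 : ‖a k * t ^ k‖ = |a k| * |t| ^ k := by
    rw [norm_mul, Real.norm_eq_abs, Real.norm_eq_abs, abs_pow]
  rw [h1]
  have hp : (0:ℝ) ≤ |t| ^ k := by positivity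
  have h2 : |a k| * |t| ^ k ≤ (C * ((k : ℝ)+1)^2) * |t| ^ k :=
    mul_le_mul_of_nonneg_right (hC k) hp
  have h3 : (C * ((k : ℝ)+1)^2) * |t| ^ k ≤ C * (((k : ℝ)+1)^3 * |t| ^ k) := by
    have hnn : (0:ℝ) ≤ C * |t| ^ k * (((k:ℝ)+1)^2 * k) := by positivity
    nlinarith [hnn]
  show |a k| * |t| ^ k ≤ C * (((k : ℝ)+1)^3 * |t| ^ k)
  linarith

lemma hasDerivAt_powSeries (a : ℕ → ℝ) (C : ℝ) (hC : ∀ k, |a k| ≤ C * ((k : ℝ)+1)^2)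
    {t : ℝ} (ht : |t| < 1) :
    HasDerivAt (fun s => ∑' k, a k * s ^ k)
      (∑' k : ℕ, ((k : ℝ) + 1) * a (k + 1) * t ^ k) t := by
  have hC0 : 0 ≤ C := C_nonneg a C hC
  set r : ℝ := (1 + |t|) / 2 with hr_def
  have hr0 : 0 < r := by positivity
  have hrhalf : (1:ℝ)/2 ≤ r := by
    have := abs_nonneg t; rw [hr_def]; linarith
  have hr1 : r < 1 := by rw [hr_def]; linarith
  have htr : |t| < r := by rw [hr_def]; linarith
  set u : ℕ → ℝ := fun k => 2 * C * (((k : ℝ)+1)^3 * r ^ k) with hu_def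
  have hu : Summable u := ((summable_cube_geo hr0.le hr1).mul_left (2 * C))
  have hbound : ∀ (k : ℕ) (y : ℝ), y ∈ Metric.ball (0:ℝ) r →
      ‖a k * ((k : ℝ) * y ^ (k - 1))‖ ≤ u k := by
    intro k y hy
    have hyr : |y| ≤ r := by
      have := Metric.mem_ball.mp hy
      rw [Real.dist_eq, sub_zero] at this
      exact this.le
    have hnorm : ‖a k * ((k : ℝ) * y ^ (k - 1))‖ = |a k| * ((k : ℝ) * |y| ^ (k - 1)) := by
      rw [norm_mul, Real.norm_eq_abs, Real.norm_eq_abs, abs_mul, abs_pow, Nat.abs_cast]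
    rw [hnorm]
    match k with
    | 0 => simp [hu_def]; positivity
    | (m+1) =>
      simp only [Nat.add_sub_cancel]
      have hca := hC (m+1)
      have hcast : ((m+1 : ℕ) : ℝ) = (m : ℝ) + 1 := by push_cast; ring
      rw [hcast] at hca ⊢
      have hy' : |y| ^ m ≤ r ^ m := pow_le_pow_left₀ (abs_nonneg y) hyr m
      have hrm : (0:ℝ) ≤ r ^ m := by positivity
      have h2r : r ^ m ≤ 2 * r ^ (m+1) := by
        have he : r ^ (m+1) = r ^ m * r := by ring
        nlinarith
      have step1 : |a (m+1)| * (((m:ℝ)+1) * |y| ^ m)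
          ≤ (C * (((m:ℝ)+1)+1)^2) * (((m:ℝ)+1) * r ^ m) := by
        apply mul_le_mul hca (by nlinarith) (by positivity) (by positivity)
      have step2 : (C * (((m:ℝ)+1)+1)^2) * (((m:ℝ)+1) * r ^ m)
          ≤ 2 * C * ((((m:ℝ)+1)+1)^3 * r ^ (m+1)) := by
        have hq : (0:ℝ) ≤ r ^ (m+1) := by positivity
        have e1 : (C * (((m:ℝ)+1)+1)^2) * (((m:ℝ)+1) * r ^ m)
            ≤ (C * (((m:ℝ)+1)+1)^2) * (((m:ℝ)+1) * (2 * r ^ (m+1))) := by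
          apply mul_le_mul_of_nonneg_left _ (by positivity)
          apply mul_le_mul_of_nonneg_left h2r (by positivity)
        have e2 : (C * (((m:ℝ)+1)+1)^2) * (((m:ℝ)+1) * (2 * r ^ (m+1)))
            ≤ 2 * C * ((((m:ℝ)+1)+1)^3 * r ^ (m+1)) := by
          have hm2 : ((m:ℝ)+1) ≤ ((m:ℝ)+1)+1 := by linarith
          nlinarith [sq_nonneg (((m:ℝ)+1)+1), mul_nonneg hC0 hq]
        linarith
      calc |a (m+1)| * (((m:ℝ)+1) * |y| ^ m)
          ≤ (C * (((m:ℝ)+1)+1)^2) * (((m:ℝ)+1) * r ^ m) := step1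
        _ ≤ 2 * C * ((((m:ℝ)+1)+1)^3 * r ^ (m+1)) := step2
        _ = u (m+1) := by rw [hu_def]; push_cast; ring
  have hder : ∀ (k : ℕ) (y : ℝ), y ∈ Metric.ball (0:ℝ) r →
      HasDerivAt (fun s : ℝ => a k * s ^ k) (a k * ((k : ℝ) * y ^ (k-1))) y := by
    intro k y _
    exact (hasDerivAt_pow k y).const_mul (a k)
  have h0mem : (0:ℝ) ∈ Metric.ball (0:ℝ) r := by simp [hr0]
  have htmem : t ∈ Metric.ball (0:ℝ) r := by
    rw [Metric.mem_ball, Real.dist_eq, sub_zero]; exact htr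
  have hsum0 : Summable fun k => a k * (0:ℝ) ^ k := by
    apply summable_of_ne_finset_zero (s := {0})
    intro k hk
    have : k ≠ 0 := by simpa using hk
    simp [zero_pow this]
  have H := hasDerivAt_tsum_of_isPreconnected hu Metric.isOpen_ball
    (convex_ball (0:ℝ) r).isPreconnected hder hbound h0mem hsum0 htmem
  have hsumd : Summable fun k => a k * ((k : ℝ) * t ^ (k-1)) :=
    Summable.of_norm_bounded hu (fun k => hbound k t htmem)
  have hrw : (∑' k, a k * ((k : ℝ) * t ^ (k-1)))
      = ∑' k : ℕ, ((k : ℝ) + 1) * a (k + 1) * t ^ k := by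
    rw [Summable.tsum_eq_zero_add hsumd]
    simp only [Nat.cast_zero, Nat.add_sub_cancel, Nat.cast_add, Nat.cast_one]
    rw [show (a 0 * ((0:ℝ) * (t:ℝ) ^ (0-1))) = 0 by ring, zero_add]
    apply tsum_congr; intro k; ring
  rw [hrw] at H
  exact H

end Y1aux

namespace Y1aux

/-- coefficient sequences -/
noncomputable def cf0 : ℕ → ℝ := d
noncomputable def cf1 : ℕ → ℝ := fun k => ((k : ℝ) + 1) * d (k + 1)
noncomputable def cf2 : ℕ → ℝ := fun k => ((k : ℝ) + 1) * cf1 (k + 1)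

lemma cf0_bound : ∀ k, |cf0 k| ≤ 1 * ((k : ℝ)+1)^2 := by
  intro k
  unfold cf0
  rw [abs_of_pos (d_pos k), one_mul]
  have h1 : (1:ℝ) ≤ ((k:ℝ)+1)^2 := by nlinarith [Nat.cast_nonneg (α := ℝ) k]
  exact le_trans (d_le_one k) h1

lemma cf1_bound : ∀ k, |cf1 k| ≤ 1 * ((k : ℝ)+1)^2 := by
  intro k
  have hk : (0:ℝ) ≤ (k:ℝ) := Nat.cast_nonneg k
  have hpos : 0 < cf1 k := by
    have := d_pos (k+1); unfold cf1; positivity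
  rw [abs_of_pos hpos, one_mul]
  unfold cf1
  have h1 : d (k+1) ≤ 1 := d_le_one (k+1)
  nlinarith [d_pos (k+1)]

lemma cf2_bound : ∀ k, |cf2 k| ≤ 2 * ((k : ℝ)+1)^2 := by
  intro k
  have hk : (0:ℝ) ≤ (k:ℝ) := Nat.cast_nonneg k
  have hd1 : d (k+1+1) ≤ 1 := d_le_one (k+2)
  have hdp : 0 < d (k+1+1) := d_pos (k+2)
  have hpos : 0 < cf2 k := by
    unfold cf2 cf1; push_cast; positivity
  rw [abs_of_pos hpos]
  unfold cf2 cf1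
  push_cast
  nlinarith

noncomputable def g0 : ℝ → ℝ := fun t => ∑' k, cf0 k * t ^ k
noncomputable def g1 : ℝ → ℝ := fun t => ∑' k, cf1 k * t ^ k
noncomputable def g2 : ℝ → ℝ := fun t => ∑' k, cf2 k * t ^ k

lemma hasDerivAt_g0 {t : ℝ} (ht : |t| < 1) : HasDerivAt g0 (g1 t) t := by
  have H := hasDerivAt_powSeries cf0 1 cf0_bound ht
  have : (∑' k : ℕ, ((k : ℝ) + 1) * cf0 (k + 1) * t ^ k) = g1 t := by
    apply tsum_congr; intro k
    unfold cf0 cf1; ring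
  rwa [this] at H

lemma hasDerivAt_g1 {t : ℝ} (ht : |t| < 1) : HasDerivAt g1 (g2 t) t := by
  have H := hasDerivAt_powSeries cf1 1 cf1_bound ht
  have : (∑' k : ℕ, ((k : ℝ) + 1) * cf1 (k + 1) * t ^ k) = g2 t := by
    apply tsum_congr; intro k
    unfold cf2; ring
  rwa [this] at H

lemma continuousAt_g2 {t : ℝ} (ht : |t| < 1) : ContinuousAt g2 t :=
  (hasDerivAt_powSeries cf2 2 cf2_bound ht).continuousAt

/-- shift of a coefficient sequence -/
def sh (e : ℕ → ℝ) : ℕ → ℝ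
  | 0 => 0
  | (k+1) => e k

lemma sh_bound (e : ℕ → ℝ) (C : ℝ) (hC : ∀ k, |e k| ≤ C * ((k : ℝ)+1)^2) :
    ∀ k, |sh e k| ≤ C * ((k : ℝ)+1)^2 := by
  have hC0 : 0 ≤ C := C_nonneg e C hC
  intro k
  match k with
  | 0 => simp [sh]; positivity
  | (m+1) =>
    have h := hC m
    have h2 : C * ((m : ℝ)+1)^2 ≤ C * (((m+1 : ℕ) : ℝ)+1)^2 := by
      push_cast
      nlinarith [Nat.cast_nonneg (α := ℝ) m]
    exact le_trans h h2

lemma tsum_shift (e : ℕ → ℝ) {t : ℝ} (hsh : Summable fun k => sh e k * t ^ k)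
    (hs : Summable fun k => e k * t ^ k) :
    ∑' k, sh e k * t ^ k = t * ∑' k, e k * t ^ k := by
  rw [Summable.tsum_eq_zero_add hsh]
  simp only [sh, pow_zero, mul_one, zero_mul, zero_add]
  rw [← tsum_mul_left]
  apply tsum_congr; intro k; ring

/-- the fundamental coefficient identity -/
lemma coeff_identity (k : ℕ) :
    cf1 k + sh cf2 k = cf0 k + 2 * sh cf1 k + sh (sh cf2) k := by
  match k with
  | 0 =>
    simp only [sh, cf0, cf1]
    have h := d_rec 0
    norm_num at h ⊢
    linarith
  | 1 =>
    simp only [sh, cf0, cf1, cf2]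
    have h0 := d_rec 0
    have h1 := d_rec 1
    norm_num at h0 h1 ⊢
    nlinarith
  | (m+2) =>
    simp only [sh, cf0, cf1, cf2]
    have h := d_rec (m+2)
    push_cast at h ⊢
    nlinarith [h]

lemma key_identity {t : ℝ} (ht : |t| < 1) :
    t * (1 - t) * g2 t + (1 - 2*t) * g1 t - g0 t = 0 := by
  have s0 : Summable fun k => cf0 k * t ^ k := summable_powSeries cf0 1 cf0_bound ht
  have s1 : Summable fun k => cf1 k * t ^ k := summable_powSeries cf1 1 cf1_bound ht
  have s2 : Summable fun k => cf2 k * t ^ k := summable_powSeries cf2 2 cf2_bound ht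
  have ssh1 : Summable fun k => sh cf1 k * t ^ k :=
    summable_powSeries _ 1 (sh_bound cf1 1 cf1_bound) ht
  have ssh2 : Summable fun k => sh cf2 k * t ^ k :=
    summable_powSeries _ 2 (sh_bound cf2 2 cf2_bound) ht
  have sshsh2 : Summable fun k => sh (sh cf2) k * t ^ k :=
    summable_powSeries _ 2 (sh_bound _ 2 (sh_bound cf2 2 cf2_bound)) ht
  -- main: g1 + t*g2 = g0 + 2*t*g1 + t*(t*g2)
  have main : g1 t + t * g2 t = g0 t + 2 * (t * g1 t) + t * (t * g2 t) := by
    have e1 : t * g2 t = ∑' k, sh cf2 k * t ^ k := (tsum_shift cf2 ssh2 s2).symm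
    have e2 : t * g1 t = ∑' k, sh cf1 k * t ^ k := (tsum_shift cf1 ssh1 s1).symm
    have e3 : t * (t * g2 t) = ∑' k, sh (sh cf2) k * t ^ k := by
      rw [e1]; exact (tsum_shift (sh cf2) sshsh2 ssh2).symm
    rw [e3, e1, e2]
    have lhs : g1 t + (∑' k, sh cf2 k * t ^ k)
        = ∑' k, (cf1 k * t ^ k + sh cf2 k * t ^ k) := (Summable.tsum_add s1 ssh2).symm
    have rhs : g0 t + 2 * (∑' k, sh cf1 k * t ^ k) + (∑' k, sh (sh cf2) k * t ^ k)
        = ∑' k, (cf0 k * t ^ k + 2 * (sh cf1 k * t ^ k) + sh (sh cf2) k * t ^ k) := by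
      rw [Summable.tsum_add (s0.add (ssh1.mul_left 2)) sshsh2, Summable.tsum_add s0 (ssh1.mul_left 2),
        tsum_mul_left]
      rfl
    rw [lhs, rhs]
    apply tsum_congr
    intro k
    have := coeff_identity k
    linear_combination (t ^ k) * this
  linarith [main]

end Y1aux

namespace Y1aux

lemma summable_g0 {t : ℝ} (ht : |t| < 1) : Summable fun k => cf0 k * t ^ k :=
  summable_powSeries cf0 1 cf0_bound ht

lemma summable_g1 {t : ℝ} (ht : |t| < 1) : Summable fun k => cf1 k * t ^ k :=
  summable_powSeries cf1 1 cf1_bound ht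

lemma g0_ge_one {t : ℝ} (ht0 : 0 ≤ t) (ht : |t| < 1) : 1 ≤ g0 t := by
  have h := Summable.le_tsum (summable_g0 ht) 0 (fun k _ => by
    have := d_pos k
    have : 0 ≤ cf0 k := (d_pos k).le
    positivity)
  simpa [g0, cf0, d_zero] using h

lemma g1_half_pos : 0 < g1 (1/2) := by
  have ht : |(1/2 : ℝ)| < 1 := by rw [abs_of_pos] <;> norm_num
  have h := Summable.le_tsum (summable_g1 ht) 0 (fun k _ => by
    have hp : 0 < cf1 k := by
      have := d_pos (k+1); unfold cf1; positivity
    positivity)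
  have h0 : cf1 0 * (1/2:ℝ) ^ 0 = d 1 := by simp [cf1]
  have hd1 : 0 < d 1 := d_pos 1
  calc (0:ℝ) < d 1 := hd1
    _ = cf1 0 * (1/2:ℝ) ^ 0 := h0.symm
    _ ≤ g1 (1/2) := h

/-- the matching constant -/
noncomputable def κ : ℝ := 2 / g1 (1/2)

lemma κ_pos : 0 < κ := by
  have := g1_half_pos; unfold κ; positivity

noncomputable def F : ℝ → ℝ := fun u => u + κ * g0 ((1 - u)/2)
noncomputable def F' : ℝ → ℝ := fun u => 1 - (κ/2) * g1 ((1 - u)/2)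
noncomputable def F'' : ℝ → ℝ := fun u => (κ/4) * g2 ((1 - u)/2)

lemma t_mem {u : ℝ} (hu : -1 < u) (hu2 : u < 3) : |(1 - u)/2| < 1 := by
  rw [abs_lt]; constructor <;> linarith

lemma inner_hasDerivAt (u : ℝ) : HasDerivAt (fun v : ℝ => (1 - v)/2) (-(1/2)) u := by
  have h : HasDerivAt (fun v : ℝ => (1 - v)/2) ((-1)/2) u := ((hasDerivAt_id u).const_sub 1).div_const 2
  convert h using 1; norm_num

lemma hasDerivAt_F {u : ℝ} (hu : -1 < u) (hu2 : u < 3) : HasDerivAt F (F' u) u := by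
  have ht := t_mem hu hu2
  have hg := (hasDerivAt_g0 ht).comp u (inner_hasDerivAt u)
  have h := (hasDerivAt_id u).add ((hg.const_mul κ))
  have : (1 + κ * (g1 ((1-u)/2) * -(1/2))) = F' u := by unfold F'; ring
  rw [this] at h
  exact h.congr_deriv rfl

lemma hasDerivAt_F' {u : ℝ} (hu : -1 < u) (hu2 : u < 3) : HasDerivAt F' (F'' u) u := by
  have ht := t_mem hu hu2
  have hg := (hasDerivAt_g1 ht).comp u (inner_hasDerivAt u)
  have h := (hg.const_mul (κ/2)).const_sub 1
  have : (-(κ/2 * (g2 ((1-u)/2) * -(1/2)))) = F'' u := by unfold F''; ring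
  rw [this] at h
  exact h

lemma F'_zero : F' 0 = 0 := by
  unfold F'
  have h : g1 ((1 - 0)/2) = g1 (1/2) := by norm_num
  rw [h]
  unfold κ
  have hne : g1 (1/2) ≠ 0 := ne_of_gt g1_half_pos
  field_simp
  ring

/-- The ODE satisfied by F on [0,1]. -/
lemma F_ode {u : ℝ} (hu0 : 0 ≤ u) (hu1 : u ≤ 1) :
    -(1 - u^2) * F'' u + 2*u*F' u + F u = 3*u := by
  have ht : |(1 - u)/2| < 1 := t_mem (by linarith) (by linarith)
  have key := key_identity ht
  unfold F F' F''
  linear_combination (-κ) * key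

end Y1aux

namespace Y1aux

noncomputable def Yf : ℝ → ℝ := fun x => F |x|
noncomputable def Yf' : ℝ → ℝ := fun x => if x < 0 then -F' (-x) else F' x
noncomputable def Yf'' : ℝ → ℝ := fun x => F'' |x|

lemma babs : (fun x : ℝ => |x|) =O[nhds 0] fun x : ℝ => x := by
  apply Asymptotics.isBigO_of_le
  intro x
  simp [Real.norm_eq_abs, abs_abs]

lemma habs_tendsto : Filter.Tendsto (fun x : ℝ => |x|) (nhds 0) (nhds (0:ℝ)) := by
  have := continuous_abs.tendsto (0:ℝ)
  simpa using this

lemma hasDerivAt_Yf {x : ℝ} (hx : x ∈ Icc (-1:ℝ) 1) : HasDerivAt Yf (Yf' x) x := by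
  obtain ⟨hx1, hx2⟩ := hx
  rcases lt_trichotomy x 0 with hneg | hzero | hpos
  · -- x < 0
    have hF := hasDerivAt_F (show (-1:ℝ) < -x by linarith) (show -x < 3 by linarith)
    have hcomp := hF.comp x (hasDerivAt_neg x)
    have heq : Yf =ᶠ[nhds x] fun y => F (-y) := by
      filter_upwards [eventually_lt_nhds hneg] with y hy
      simp [Yf, abs_of_neg hy]
    have h := hcomp.congr_of_eventuallyEq heq
    have hval : Yf' x = F' (-x) * (-1) := by
      rw [show Yf' x = -F' (-x) from if_pos hneg]; ring
    rw [hval]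
    exact h
  · -- x = 0
    subst hzero
    have hF0 : HasDerivAt F 0 0 := by
      have h := hasDerivAt_F (show (-1:ℝ) < 0 by norm_num) (by norm_num)
      rwa [F'_zero] at h
    have he : (fun u => F u - F 0 - u * 0) =o[nhds 0] fun u : ℝ => u := by
      have := hasDerivAt_iff_isLittleO.mp hF0
      simpa using this
    have hcomp := (he.comp_tendsto habs_tendsto).trans_isBigO babs
    have hval : Yf' 0 = 0 := by simp [Yf', F'_zero]
    rw [hval, hasDerivAt_iff_isLittleO]
    have hg : (fun x' : ℝ => Yf x' - Yf 0 - (x' - 0) * 0) = fun x : ℝ => F |x| - F 0 - |x| * 0 := by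
      funext y
      simp [Yf, abs_zero]
    simp only [smul_eq_mul, hg]
    simpa [Function.comp_def] using hcomp
  · -- 0 < x
    have hF := hasDerivAt_F (show (-1:ℝ) < x by linarith) (show x < 3 by linarith)
    have heq : Yf =ᶠ[nhds x] F := by
      filter_upwards [eventually_gt_nhds hpos] with y hy
      simp [Yf, abs_of_pos hy]
    have h := hF.congr_of_eventuallyEq heq
    have hval : Yf' x = F' x := by simp [Yf', not_lt.mpr hpos.le]
    rw [hval]
    exact h

lemma hasDerivAt_Yf' {x : ℝ} (hx : x ∈ Icc (-1:ℝ) 1) : HasDerivAt Yf' (Yf'' x) x := by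
  obtain ⟨hx1, hx2⟩ := hx
  rcases lt_trichotomy x 0 with hneg | hzero | hpos
  · -- x < 0
    have hF := hasDerivAt_F' (show (-1:ℝ) < -x by linarith) (show -x < 3 by linarith)
    have hcomp := (hF.comp x (hasDerivAt_neg x)).neg
    have heq : Yf' =ᶠ[nhds x] fun y => -F' (-y) := by
      filter_upwards [eventually_lt_nhds hneg] with y hy
      simp [Yf', if_pos hy]
    have h := hcomp.congr_of_eventuallyEq heq
    have hval : Yf'' x = -(F'' (-x) * (-1)) := by
      simp [Yf'', abs_of_neg hneg]
    rw [hval]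
    exact h
  · -- x = 0
    subst hzero
    have hF0 : HasDerivAt F' (F'' 0) 0 :=
      hasDerivAt_F' (show (-1:ℝ) < 0 by norm_num) (by norm_num)
    have he : (fun u => F' u - F' 0 - u * F'' 0) =o[nhds 0] fun u : ℝ => u := by
      have := hasDerivAt_iff_isLittleO.mp hF0
      simpa using this
    have hcomp := (he.comp_tendsto habs_tendsto).trans_isBigO babs
    rw [hasDerivAt_iff_isLittleO]
    have hval0 : Yf' 0 = F' 0 := by simp [Yf']
    have hval2 : Yf'' 0 = F'' 0 := by simp [Yf'', abs_zero]
    have hnorm : (fun x : ℝ => ‖Yf' x - Yf' 0 - (x - 0) * Yf'' 0‖)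
        = fun x : ℝ => ‖F' |x| - F' 0 - |x| * F'' 0‖ := by
      funext y
      rw [hval0, hval2, sub_zero]
      rcases lt_or_ge y 0 with hy | hy
      · rw [show Yf' y = -F' (-y) from if_pos hy, abs_of_neg hy, F'_zero]
        rw [show -F' (-y) - 0 - y * F'' 0 = -(F' (-y) - 0 - -y * F'' 0) by ring, norm_neg]
      · rw [show Yf' y = F' y from if_neg (not_lt.mpr hy), abs_of_nonneg hy]
    rw [← Asymptotics.isLittleO_norm_left]
    simp only [smul_eq_mul]
    rw [hnorm, Asymptotics.isLittleO_norm_left]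
    simpa [Function.comp_def] using hcomp
  · -- 0 < x
    have hF := hasDerivAt_F' (show (-1:ℝ) < x by linarith) (show x < 3 by linarith)
    have heq : Yf' =ᶠ[nhds x] F' := by
      filter_upwards [eventually_gt_nhds hpos] with y hy
      simp [Yf', not_lt.mpr hy.le]
    have h := hF.congr_of_eventuallyEq heq
    have hval : Yf'' x = F'' x := by simp [Yf'', abs_of_pos hpos]
    rw [hval]
    exact h

lemma continuousOn_Yf'' : ContinuousOn Yf'' (Icc (-1:ℝ) 1) := by
  intro x hx
  obtain ⟨hx1, hx2⟩ := hx
  have hax : |x| < 3 := by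
    rw [abs_lt]; constructor <;> linarith
  have hax2 : (-1:ℝ) < |x| := lt_of_lt_of_le (by norm_num) (abs_nonneg x)
  have ht := t_mem hax2 hax
  have h1 : ContinuousAt (fun v : ℝ => (1 - v)/2) |x| := by fun_prop
  have h2a : ContinuousAt (g2 ∘ (fun v : ℝ => (1 - v)/2)) |x| :=
    ContinuousAt.comp (continuousAt_g2 ht) h1
  have h2 : ContinuousAt (fun v : ℝ => g2 ((1 - v)/2)) |x| := h2a
  have h3 : ContinuousAt F'' |x| := h2.const_mul (κ/4)
  have h4 : ContinuousAt Yf'' x := h3.comp continuous_abs.continuousAt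
  exact h4.continuousWithinAt

lemma Yf_ode {x : ℝ} (hx : x ∈ Icc (-1:ℝ) 1) :
    -(1 - x^2) * Yf'' x + 2*x*Yf' x + Yf x = 3 * |x| := by
  obtain ⟨hx1, hx2⟩ := hx
  rcases lt_or_ge x 0 with hneg | hpos
  · have hode := F_ode (show (0:ℝ) ≤ -x by linarith) (show -x ≤ 1 by linarith)
    rw [abs_of_neg hneg]
    simp only [Yf, Yf', Yf'', if_pos hneg, abs_of_neg hneg]
    nlinarith [hode]
  · have hode := F_ode hpos hx2
    rw [abs_of_nonneg hpos]
    simp only [Yf, Yf', Yf'', if_neg (not_lt.mpr hpos), abs_of_nonneg hpos]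
    linarith [hode]

lemma Yf_even (x : ℝ) : Yf (-x) = Yf x := by simp [Yf, abs_neg]

lemma Yf_pos {x : ℝ} (hx : x ∈ Icc (-1:ℝ) 1) : 0 < Yf x := by
  obtain ⟨hx1, hx2⟩ := hx
  have hax : |x| ≤ 1 := abs_le.mpr ⟨hx1, hx2⟩
  have ht0 : 0 ≤ (1 - |x|)/2 := by linarith
  have ht : |(1 - |x|)/2| < 1 := by
    rw [abs_of_nonneg ht0]
    have := abs_nonneg x
    linarith
  have hg := g0_ge_one ht0 ht
  have hk := κ_pos
  have : Yf x = |x| + κ * g0 ((1 - |x|)/2) := rfl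
  rw [this]
  nlinarith [abs_nonneg x]

end Y1aux

namespace Y1aux

private noncomputable def qfun (W W' : ℝ → ℝ) : ℝ → ℝ :=
  fun x => W x ^ 2 + (1 - x^2) * W' x ^ 2

private noncomputable def Pfun (W W' : ℝ → ℝ) : ℝ → ℝ :=
  fun x => (1 - x^2) * (W' x * W x)

lemma energy_zero (W W' W'' : ℝ → ℝ)
    (hW : ∀ x ∈ Icc (-1:ℝ) 1, HasDerivWithinAt W (W' x) (Icc (-1:ℝ) 1) x)
    (hW' : ∀ x ∈ Icc (-1:ℝ) 1, HasDerivWithinAt W' (W'' x) (Icc (-1:ℝ) 1) x)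
    (hL : ∀ x ∈ Icc (-1:ℝ) 1, -(1 - x^2) * W'' x + 2*x*W' x + W x = 0) :
    ∀ x ∈ Icc (-1:ℝ) 1, W x = 0 := by
  have hle : (-1:ℝ) ≤ 1 := by norm_num
  have contW : ContinuousOn W (Icc (-1:ℝ) 1) := fun x hx => (hW x hx).continuousWithinAt
  have contW' : ContinuousOn W' (Icc (-1:ℝ) 1) := fun x hx => (hW' x hx).continuousWithinAt
  have hcontq : ContinuousOn (qfun W W') (Icc (-1:ℝ) 1) := by
    unfold qfun
    apply ContinuousOn.add
    · exact (contW.mul contW).congr (fun x _ => by rw [Pi.mul_apply]; ring)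
    · apply ContinuousOn.mul
      · fun_prop
      · exact (contW'.mul contW').congr (fun x _ => by rw [Pi.mul_apply]; ring)
  have hcontP : ContinuousOn (Pfun W W') (Icc (-1:ℝ) 1) := by
    unfold Pfun
    apply ContinuousOn.mul
    · fun_prop
    · exact contW'.mul contW
  have hP : ∀ x ∈ Icc (-1:ℝ) 1, HasDerivWithinAt (Pfun W W') (qfun W W' x) (Icc (-1:ℝ) 1) x := by
    intro x hx
    have h1 : HasDerivAt (fun y : ℝ => 1 - y^2) (-(2*x)) x := by
      simpa using ((hasDerivAt_pow 2 x).const_sub 1)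
    have h2 := (hW' x hx).mul (hW x hx)
    have hmul := (h1.hasDerivWithinAt).mul h2
    have hthis := hL x hx
    have hval : qfun W W' x
        = -(2*x) * (W' x * W x) + (1 - x^2) * (W'' x * W x + W' x * W' x) := by
      unfold qfun
      linear_combination (W x) * hthis
    rw [hval]
    exact hmul
  have hderiv : ∀ x ∈ Ioo (-1:ℝ) 1, HasDerivWithinAt (Pfun W W') (qfun W W' x) (Ioi x) x := by
    intro x hx
    have hmem : Icc (-1:ℝ) 1 ∈ nhds x := Icc_mem_nhds hx.1 hx.2
    exact ((hP x (Ioo_subset_Icc_self hx)).hasDerivAt hmem).hasDerivWithinAt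
  have hqint : IntervalIntegrable (qfun W W') MeasureTheory.volume (-1) 1 := by
    apply ContinuousOn.intervalIntegrable
    rwa [uIcc_of_le hle]
  have hftc : ∫ y in (-1:ℝ)..1, qfun W W' y = Pfun W W' 1 - Pfun W W' (-1) :=
    intervalIntegral.integral_eq_sub_of_hasDeriv_right_of_le hle hcontP hderiv hqint
  have hP1 : Pfun W W' 1 = 0 := by simp [Pfun]
  have hPm1 : Pfun W W' (-1) = 0 := by simp [Pfun]
  have hzero : ∫ y in (-1:ℝ)..1, qfun W W' y = 0 := by rw [hftc, hP1, hPm1]; ring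
  have hqnonneg : ∀ x ∈ Icc (-1:ℝ) 1, 0 ≤ qfun W W' x := by
    intro x hx
    obtain ⟨h1, h2⟩ := hx
    have hx2 : 0 ≤ 1 - x^2 := by nlinarith
    have := sq_nonneg (W x)
    have := sq_nonneg (W' x)
    unfold qfun
    positivity
  have hqzero : ∀ x ∈ Icc (-1:ℝ) 1, qfun W W' x = 0 := by
    intro x₀ hx₀
    by_contra hne
    have hqpos : 0 < qfun W W' x₀ := lt_of_le_of_ne (hqnonneg x₀ hx₀) (Ne.symm hne)
    have hcw : ContinuousWithinAt (qfun W W') (Icc (-1:ℝ) 1) x₀ := hcontq x₀ hx₀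
    have hev := hcw.eventually
      (eventually_gt_nhds (show qfun W W' x₀ / 2 < qfun W W' x₀ by linarith))
    rw [Filter.eventually_iff, Metric.mem_nhdsWithin_iff] at hev
    obtain ⟨δ, hδ, hball⟩ := hev
    obtain ⟨hx₀1, hx₀2⟩ := hx₀
    have hst : max (x₀ - δ/2) (-1) < min (x₀ + δ/2) 1 := by
      apply max_lt <;> apply lt_min <;> linarith
    set s : ℝ := max (x₀ - δ/2) (-1)
    set tt : ℝ := min (x₀ + δ/2) 1
    have hs1 : (-1:ℝ) ≤ s := le_max_right _ _
    have htt1 : tt ≤ 1 := min_le_right _ _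
    have hsub : Icc s tt ⊆ Icc (-1:ℝ) 1 := by
      intro y hy
      exact ⟨le_trans hs1 hy.1, le_trans hy.2 htt1⟩
    have hqhalf : ∀ y ∈ Icc s tt, qfun W W' x₀ / 2 ≤ qfun W W' y := by
      intro y hy
      have hy1 : x₀ - δ/2 ≤ y := le_trans (le_max_left _ _) hy.1
      have hy2 : y ≤ x₀ + δ/2 := le_trans hy.2 (min_le_left _ _)
      have hyball : y ∈ Metric.ball x₀ δ := by
        rw [Metric.mem_ball, Real.dist_eq, abs_lt]
        constructor <;> linarith
      exact le_of_lt (hball ⟨hyball, hsub hy⟩)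
    have hint1 : IntervalIntegrable (qfun W W') MeasureTheory.volume (-1) s := by
      apply ContinuousOn.intervalIntegrable
      apply hcontq.mono
      rw [uIcc_of_le hs1]
      intro y hy
      exact ⟨hy.1, le_trans hy.2 (le_trans hst.le htt1)⟩
    have hint2 : IntervalIntegrable (qfun W W') MeasureTheory.volume s tt := by
      apply ContinuousOn.intervalIntegrable
      apply hcontq.mono
      rwa [uIcc_of_le hst.le]
    have hint3 : IntervalIntegrable (qfun W W') MeasureTheory.volume tt 1 := by
      apply ContinuousOn.intervalIntegrable
      apply hcontq.mono
      rw [uIcc_of_le htt1]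
      intro y hy
      exact ⟨le_trans hs1 (le_trans hst.le hy.1), hy.2⟩
    have hi1 : 0 ≤ ∫ y in (-1:ℝ)..s, qfun W W' y := by
      apply intervalIntegral.integral_nonneg hs1
      intro y hy
      exact hqnonneg y ⟨hy.1, le_trans hy.2 (le_trans hst.le htt1)⟩
    have hi3 : 0 ≤ ∫ y in tt..(1:ℝ), qfun W W' y := by
      apply intervalIntegral.integral_nonneg htt1
      intro y hy
      exact hqnonneg y ⟨le_trans hs1 (le_trans hst.le hy.1), hy.2⟩
    have hi2 : (tt - s) * (qfun W W' x₀ / 2) ≤ ∫ y in s..tt, qfun W W' y := by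
      have hconst : ∫ _ in s..tt, (qfun W W' x₀ / 2) = (tt - s) * (qfun W W' x₀ / 2) := by
        rw [intervalIntegral.integral_const]; simp [smul_eq_mul]
      rw [← hconst]
      exact intervalIntegral.integral_mono_on hst.le intervalIntegrable_const hint2 hqhalf
    have hadd1 : (∫ y in (-1:ℝ)..s, qfun W W' y) + (∫ y in s..tt, qfun W W' y)
        = ∫ y in (-1:ℝ)..tt, qfun W W' y :=
      intervalIntegral.integral_add_adjacent_intervals hint1 hint2
    have hadd2 : (∫ y in (-1:ℝ)..tt, qfun W W' y) + (∫ y in tt..(1:ℝ), qfun W W' y)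
        = ∫ y in (-1:ℝ)..1, qfun W W' y :=
      intervalIntegral.integral_add_adjacent_intervals (hint1.trans hint2) hint3
    have hpos2 : 0 < (tt - s) * (qfun W W' x₀ / 2) := by
      apply mul_pos (by linarith) (by linarith)
    linarith [hzero, hi1, hi2, hi3, hadd1, hadd2]
  intro x hx
  have hq0 := hqzero x hx
  have h1 : 0 ≤ 1 - x^2 := by
    obtain ⟨ha, hb⟩ := hx; nlinarith
  have h2 := sq_nonneg (W' x)
  have h3 := sq_nonneg (W x)
  have hW2 : W x ^ 2 = 0 := by
    unfold qfun at hq0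
    nlinarith
  exact pow_eq_zero_iff (by norm_num) |>.mp hW2

end Y1aux

open Y1aux in
/-- There is a unique `C²` solution `Y` of `L[Y](x) = 3|x|` on `[-1,1]`;
moreover it is even and strictly positive. -/
theorem exists_unique_Y1 :
    ∃ Y Y' Y'' : ℝ → ℝ, IsC2On Y Y' Y'' ∧
      (∀ x ∈ Icc (-1 : ℝ) 1, Lop Y Y' Y'' x = 3 * |x|) ∧
      (∀ x ∈ Icc (-1 : ℝ) 1, Y (-x) = Y x) ∧
      (∀ x ∈ Icc (-1 : ℝ) 1, 0 < Y x) ∧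
      (∀ Z Z' Z'' : ℝ → ℝ, IsC2On Z Z' Z'' →
        (∀ x ∈ Icc (-1 : ℝ) 1, Lop Z Z' Z'' x = 3 * |x|) →
        ∀ x ∈ Icc (-1 : ℝ) 1, Z x = Y x) := by
  refine ⟨Yf, Yf', Yf'', ⟨?_, ?_, ?_⟩, ?_, ?_, ?_, ?_⟩
  · intro x hx
    exact (hasDerivAt_Yf hx).hasDerivWithinAt
  · intro x hx
    exact (hasDerivAt_Yf' hx).hasDerivWithinAt
  · exact continuousOn_Yf''
  · intro x hx
    unfold Lop
    exact Yf_ode hx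
  · intro x _
    exact Yf_even x
  · intro x hx
    exact Yf_pos hx
  · intro Z Z' Z'' hZ hLZ x hx
    obtain ⟨hZ1, hZ2, _⟩ := hZ
    have hY1 : ∀ y ∈ Icc (-1:ℝ) 1, HasDerivWithinAt Yf (Yf' y) (Icc (-1:ℝ) 1) y :=
      fun y hy => (hasDerivAt_Yf hy).hasDerivWithinAt
    have hY2 : ∀ y ∈ Icc (-1:ℝ) 1, HasDerivWithinAt Yf' (Yf'' y) (Icc (-1:ℝ) 1) y :=
      fun y hy => (hasDerivAt_Yf' hy).hasDerivWithinAt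
    have hWzero := energy_zero (fun y => Z y - Yf y) (fun y => Z' y - Yf' y)
      (fun y => Z'' y - Yf'' y)
      (fun y hy => (hZ1 y hy).sub (hY1 y hy))
      (fun y hy => (hZ2 y hy).sub (hY2 y hy))
      (fun y hy => by
        have h1 := hLZ y hy
        have h2 := Yf_ode hy
        unfold Lop at h1
        ring_nf
        ring_nf at h1 h2
        linarith)
      x hx
    have : Z x - Yf x = 0 := hWzero
    linarith
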